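/- Let N' ∈ 𝔤 be the matrix whose only nonzero entry is a 1 in position (0,3). The centralizer 𝔷 = {z ∈ 𝔤 : zN' = N'z} equals the set of matrices with rows (0,b,c,d), (0,f,g,c), (0,i,−f,−b), (0,0,0,0) for (b,c,d,f,g,i) ∈ ℂ⁶; in particular 𝔷 is a 6-dimensional ℂ-subspace of 𝔤. -/
import Mathlib

open Matrix

noncomputable section

/-- The Lie algebra 𝔤 ≅ sp₄(ℂ), realized as the space of 4×4 complex matrices
with rows (A,B,C,D), (E,F,G,C), (H,I,−F,−B), (J,H,−E,−A). -/
def sp4 : Submodule ℂ (Matrix (Fin 4) (Fin 4) ℂ) where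
  carrier := {M | M 1 3 = M 0 2 ∧ M 2 2 = -M 1 1 ∧ M 2 3 = -M 0 1 ∧
    M 3 1 = M 2 0 ∧ M 3 2 = -M 1 0 ∧ M 3 3 = -M 0 0}
  add_mem' := by
    rintro a b ⟨h1, h2, h3, h4, h5, h6⟩ ⟨k1, k2, k3, k4, k5, k6⟩
    simp only [Set.mem_setOf_eq, Matrix.add_apply, h1, h2, h3, h4, h5, h6,
      k1, k2, k3, k4, k5, k6]
    refine ⟨?_, ?_, ?_, ?_, ?_, ?_⟩ <;> first | trivial | ring
  zero_mem' := by
    simp [Set.mem_setOf_eq]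
  smul_mem' := by
    rintro c a ⟨h1, h2, h3, h4, h5, h6⟩
    simp only [Set.mem_setOf_eq, Matrix.smul_apply, h1, h2, h3, h4, h5, h6, smul_eq_mul]
    refine ⟨?_, ?_, ?_, ?_, ?_, ?_⟩ <;> first | trivial | ring

/-- Matrices commuting with a given matrix `q`. -/
def commWith (q : Matrix (Fin 4) (Fin 4) ℂ) : Submodule ℂ (Matrix (Fin 4) (Fin 4) ℂ) where
  carrier := {z | z * q = q * z}
  add_mem' := by
    intro a b ha hb
    simp only [Set.mem_setOf_eq] at *
    rw [add_mul, mul_add, ha, hb]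
  zero_mem' := by simp
  smul_mem' := by
    intro c a ha
    simp only [Set.mem_setOf_eq] at *
    rw [smul_mul_assoc, mul_smul_comm, ha]

/-- The centralizer 𝓩_q = {z ∈ 𝔤 : zq = qz}, a ℂ-subspace of 𝔤. -/
def cent (q : Matrix (Fin 4) (Fin 4) ℂ) : Submodule ℂ (Matrix (Fin 4) (Fin 4) ℂ) :=
  sp4 ⊓ commWith q

/-- The element q(b,c,d,f,g,i) of the Slodowy slice. -/
def qmat (b c d f g i : ℂ) : Matrix (Fin 4) (Fin 4) ℂ :=
  !![0, b, c, d; 0, f, g, c; 0, i, -f, -b; 1, 0, 0, 0]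

def mkM (b c d f g i : ℂ) : Matrix (Fin 4) (Fin 4) ℂ :=
  !![0,b,c,d; 0,f,g,c; 0,i,-f,-b; 0,0,0,0]

lemma forward_aux (M : Matrix (Fin 4) (Fin 4) ℂ)
    (hc : M * !![0,0,0,(1:ℂ); 0,0,0,0; 0,0,0,0; 0,0,0,0] =
          !![0,0,0,(1:ℂ); 0,0,0,0; 0,0,0,0; 0,0,0,0] * M)
    (h1 : M 1 3 = M 0 2) (h2 : M 2 2 = -M 1 1) (h3 : M 2 3 = -M 0 1)
    (h4 : M 3 1 = M 2 0) (h5 : M 3 2 = -M 1 0) (h6 : M 3 3 = -M 0 0) :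
    M = mkM (M 0 1) (M 0 2) (M 0 3) (M 1 1) (M 1 2) (M 2 1) := by
  have e : ∀ i j, (M * !![0,0,0,(1:ℂ); 0,0,0,0; 0,0,0,0; 0,0,0,0]) i j =
      (!![0,0,0,(1:ℂ); 0,0,0,0; 0,0,0,0; 0,0,0,0] * M) i j := fun i j => by rw [hc]
  have e10 : M 1 0 = 0 := by
    have := e 1 3; simp [Matrix.mul_apply, Fin.sum_univ_four, Matrix.vecHead, Matrix.vecTail] at this
    linear_combination this
  have e20 : M 2 0 = 0 := by
    have := e 2 3; simp [Matrix.mul_apply, Fin.sum_univ_four, Matrix.vecHead, Matrix.vecTail] at this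
    linear_combination this
  have e30 : M 3 0 = 0 := by
    have := e 3 3; simp [Matrix.mul_apply, Fin.sum_univ_four, Matrix.vecHead, Matrix.vecTail] at this
    linear_combination this
  have e31 : M 3 1 = 0 := by
    have := e 0 1; simp [Matrix.mul_apply, Fin.sum_univ_four, Matrix.vecHead, Matrix.vecTail] at this
    linear_combination -this
  have e32 : M 3 2 = 0 := by
    have := e 0 2; simp [Matrix.mul_apply, Fin.sum_univ_four, Matrix.vecHead, Matrix.vecTail] at this
    linear_combination -this
  have e00 : M 0 0 = 0 := by
    have := e 0 3; simp [Matrix.mul_apply, Fin.sum_univ_four, Matrix.vecHead, Matrix.vecTail, h6] at this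
    linear_combination this / 2
  have e33' : M 3 3 = 0 := by rw [h6, e00, neg_zero]
  ext i j
  fin_cases i <;> fin_cases j <;>
    simp [mkM, Matrix.vecHead, Matrix.vecTail, e00, e10, e20, e30, e31, e32, e33',
      h1, h2, h3, h4, h5, h6]

lemma mkM_mem (b c d f g i : ℂ) :
    mkM b c d f g i ∈ cent !![0,0,0,1; 0,0,0,0; 0,0,0,0; 0,0,0,0] := by
  constructor
  · show _ ∈ sp4.carrier
    simp [sp4, mkM, Matrix.vecHead, Matrix.vecTail]
  · show _ * _ = _ * _
    ext x y
    fin_cases x <;> fin_cases y <;>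
      simp [mkM, Matrix.mul_apply, Fin.sum_univ_four, Matrix.vecHead, Matrix.vecTail]

lemma cent_set_eq :
    (cent !![0,0,0,1; 0,0,0,0; 0,0,0,0; 0,0,0,0] : Set (Matrix (Fin 4) (Fin 4) ℂ)) =
      {M | ∃ b c d f g i : ℂ, M = !![0,b,c,d; 0,f,g,c; 0,i,-f,-b; 0,0,0,0]} := by
  ext M
  constructor
  · rintro ⟨hs, hc⟩
    obtain ⟨h1, h2, h3, h4, h5, h6⟩ := hs
    exact ⟨M 0 1, M 0 2, M 0 3, M 1 1, M 1 2, M 2 1,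
      forward_aux M hc h1 h2 h3 h4 h5 h6⟩
  · rintro ⟨b, c, d, f, g, i, rfl⟩
    exact mkM_mem b c d f g i

def phi : (Fin 6 → ℂ) →ₗ[ℂ] Matrix (Fin 4) (Fin 4) ℂ where
  toFun v := mkM (v 0) (v 1) (v 2) (v 3) (v 4) (v 5)
  map_add' u v := by
    ext x y
    fin_cases x <;> fin_cases y <;> simp [mkM, Matrix.vecHead, Matrix.vecTail] <;> ring
  map_smul' a v := by
    ext x y
    fin_cases x <;> fin_cases y <;> simp [mkM, Matrix.vecHead, Matrix.vecTail] <;> ring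

lemma phi_inj : Function.Injective phi := by
  rw [← LinearMap.ker_eq_bot]
  ext v
  simp only [LinearMap.mem_ker, Submodule.mem_bot]
  constructor
  · intro h
    have e : ∀ x y, phi v x y = (0 : Matrix (Fin 4) (Fin 4) ℂ) x y := fun x y => by rw [h]
    funext k
    fin_cases k
    · simpa [phi, mkM] using e 0 1
    · simpa [phi, mkM] using e 0 2
    · simpa [phi, mkM] using e 0 3
    · simpa [phi, mkM, Matrix.vecHead, Matrix.vecTail] using e 1 1
    · simpa [phi, mkM, Matrix.vecHead, Matrix.vecTail] using e 1 2
    · simpa [phi, mkM, Matrix.vecHead, Matrix.vecTail] using e 2 1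
  · rintro rfl; simp

lemma phi_range : LinearMap.range phi = cent !![0,0,0,1; 0,0,0,0; 0,0,0,0; 0,0,0,0] := by
  apply SetLike.ext'
  rw [cent_set_eq]
  ext M
  constructor
  · rintro ⟨v, rfl⟩
    exact ⟨v 0, v 1, v 2, v 3, v 4, v 5, rfl⟩
  · rintro ⟨b, c, d, f, g, i, rfl⟩
    exact ⟨![b, c, d, f, g, i], by
      have h5 : (![b, c, d, f, g, i] : Fin 6 → ℂ) 5 = i := rfl
      simp [phi, mkM, h5]⟩

theorem centralizer_of_Nprime :
    (cent !![0,0,0,1; 0,0,0,0; 0,0,0,0; 0,0,0,0] : Set (Matrix (Fin 4) (Fin 4) ℂ)) =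
      {M | ∃ b c d f g i : ℂ, M = !![0,b,c,d; 0,f,g,c; 0,i,-f,-b; 0,0,0,0]} ∧
    Module.finrank ℂ (cent !![0,0,0,1; 0,0,0,0; 0,0,0,0; 0,0,0,0]) = 6 := by
  refine ⟨cent_set_eq, ?_⟩
  rw [← phi_range, LinearMap.finrank_range_of_inj phi_inj]
  simp

end
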